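/- POVM concavity of observational entropy: let {Π_{i|k}} be POVMs indexed by k, λ_k > 0 with ∑_k λ_k = 1, and define the mixed POVM Π_i = ∑_k λ_k Π_{i|k}. Then for any density matrix ρ, ∑_k λ_k S_{C_k}(ρ) ≤ S_C(ρ), where S_{C_k}(ρ) = -∑_i p_{i|k} ln(p_{i|k}/V_{i|k}) with p_{i|k} = Tr[Π_{i|k} ρ], V_{i|k} = Tr[Π_{i|k}], and S_C uses p_i = ∑_k λ_k p_{i|k}, V_i = ∑_k λ_k V_{i|k}. Equality holds iff p_{i|k} = V_{i|k} (p_i / V_i) for all i, k with Π_{i|k} ≠ 0. -/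

import Mathlib

open Matrix BigOperators ComplexOrder

/-- Klein-type inequality: for `0 ≤ x`, `0 < y`, `x - y ≤ x * log (x / y)`,
with equality iff `x = y`. -/
lemma klein_aux {x y : ℝ} (hx : 0 ≤ x) (hy : 0 < y) :
    x - y ≤ x * Real.log (x / y) ∧ (x - y = x * Real.log (x / y) ↔ x = y) := by
  rcases eq_or_lt_of_le hx with h0 | hxpos
  · constructor
    · simp [← h0]; linarith
    · simp [← h0]
      constructor
      · intro h; linarith
      · intro h; exact absurd h.symm (ne_of_gt hy)
  · have ht : 0 < y / x := div_pos hy hxpos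
    have hle : Real.log (y / x) ≤ y / x - 1 := Real.log_le_sub_one_of_pos ht
    have hlogeq : x * Real.log (x / y) = -(x * Real.log (y / x)) := by
      rw [Real.log_div (ne_of_gt hxpos) (ne_of_gt hy),
        Real.log_div (ne_of_gt hy) (ne_of_gt hxpos)]
      ring
    have hkey : x * Real.log (y / x) ≤ x * (y / x - 1) :=
      mul_le_mul_of_nonneg_left hle (le_of_lt hxpos)
    have hx' : x * (y / x - 1) = y - x := by field_simp
    constructor
    · rw [hlogeq]; linarith
    · rw [hlogeq]
      constructor
      · intro h
        by_contra hne
        have htne : y / x ≠ 1 := by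
          intro h1
          apply hne
          field_simp at h1
          linarith
        have := Real.log_lt_sub_one_of_pos ht htne
        have : x * Real.log (y / x) < x * (y / x - 1) :=
          mul_lt_mul_of_pos_left this hxpos
        rw [hx'] at this
        linarith
      · intro h
        subst h
        rw [div_self (ne_of_gt hxpos), Real.log_one]
        ring

/-- The real part of the trace of the product of two PSD matrices is nonnegative. -/
lemma trace_mul_re_nonneg_aux {d : ℕ} {A B : Matrix (Fin d) (Fin d) ℂ}
    (hA : A.PosSemidef) (hB : B.PosSemidef) : 0 ≤ (A * B).trace.re := by
  open MatrixOrder in obtain ⟨C, hC⟩ := CStarAlgebra.nonneg_iff_eq_star_mul_self.mp hA.nonneg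
  rw [star_eq_conjTranspose] at hC
  have h1 : (A * B).trace = (C * B * Cᴴ).trace := by
    rw [hC, Matrix.mul_assoc, Matrix.trace_mul_comm, Matrix.mul_assoc]
  have h2 : (C * B * Cᴴ).PosSemidef := hB.mul_mul_conjTranspose_same C
  have h3 : ∀ i, 0 ≤ ((C * B * Cᴴ) i i).re := by
    intro i
    have := h2.re_dotProduct_nonneg (Pi.single i 1)
    simpa [dotProduct, Matrix.mulVec, Pi.single_apply, Finset.sum_ite_eq,
      Finset.sum_ite_eq'] using this
  rw [h1]
  rw [Matrix.trace]
  rw [Complex.re_sum]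
  exact Finset.sum_nonneg fun i _ => h3 i

/-- POVM concavity of observational entropy for a convex combination of
POVMs, with the equality condition on probability-to-volume ratios. -/
theorem obs_entropy_povm_concavity {d : ℕ} {ι κ : Type*} [Fintype ι] [Fintype κ]
    (P : ι → κ → Matrix (Fin d) (Fin d) ℂ)
    (hP : ∀ i k, (P i k).PosSemidef) (hsum : ∀ k, ∑ i, P i k = 1)
    (lam : κ → ℝ) (hlam : ∀ k, 0 < lam k) (hlamsum : ∑ k, lam k = 1)
    (ρ : Matrix (Fin d) (Fin d) ℂ) (hρ : ρ.PosSemidef) (hρtr : ρ.trace = 1)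
    (p V : ι → κ → ℝ) (pmix Vmix : ι → ℝ)
    (hpdef : ∀ i k, p i k = (P i k * ρ).trace.re)
    (hVdef : ∀ i k, V i k = (P i k).trace.re)
    (hVpos : ∀ i k, 0 < V i k)
    (hpmix : ∀ i, pmix i = ∑ k, lam k * p i k)
    (hVmix : ∀ i, Vmix i = ∑ k, lam k * V i k) :
    (∑ k, lam k * (-∑ i, p i k * Real.log (p i k / V i k))
        ≤ -∑ i, pmix i * Real.log (pmix i / Vmix i))
    ∧ ((∑ k, lam k * (-∑ i, p i k * Real.log (p i k / V i k))
        = -∑ i, pmix i * Real.log (pmix i / Vmix i))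
      ↔ ∀ i k, p i k = V i k * (pmix i / Vmix i)) := by
  have hκ : Nonempty κ := by
    by_contra h
    rw [not_nonempty_iff] at h
    rw [Finset.univ_eq_empty, Finset.sum_empty] at hlamsum
    exact one_ne_zero hlamsum.symm
  have hpnn : ∀ i k, 0 ≤ p i k := fun i k => by
    rw [hpdef]; exact trace_mul_re_nonneg_aux (hP i k) hρ
  have hpmixnn : ∀ i, 0 ≤ pmix i := fun i => by
    rw [hpmix]
    exact Finset.sum_nonneg fun k _ => mul_nonneg (hlam k).le (hpnn i k)
  have hVmixpos : ∀ i, 0 < Vmix i := fun i => by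
    rw [hVmix]
    exact Finset.sum_pos (fun k _ => mul_pos (hlam k) (hVpos i k)) Finset.univ_nonempty
  -- per-index-i statement
  have key : ∀ i,
      (pmix i * Real.log (pmix i / Vmix i)
        ≤ ∑ k, lam k * (p i k * Real.log (p i k / V i k)))
      ∧ ((pmix i * Real.log (pmix i / Vmix i)
        = ∑ k, lam k * (p i k * Real.log (p i k / V i k)))
        ↔ ∀ k, p i k = V i k * (pmix i / Vmix i)) := by
    intro i
    rcases eq_or_lt_of_le (hpmixnn i) with h0 | hpos
    · -- pmix i = 0, so all p i k = 0
      have hall : ∀ k, p i k = 0 := by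
        intro k
        have hsum0 : ∑ k, lam k * p i k = 0 := by rw [← hpmix]; exact h0.symm
        have := (Finset.sum_eq_zero_iff_of_nonneg
          (fun k _ => mul_nonneg (hlam k).le (hpnn i k))).mp hsum0 k (Finset.mem_univ k)
        exact (mul_eq_zero.mp this).resolve_left (ne_of_gt (hlam k))
      have hL : pmix i * Real.log (pmix i / Vmix i) = 0 := by rw [← h0]; ring
      have hR : ∑ k, lam k * (p i k * Real.log (p i k / V i k)) = 0 :=
        Finset.sum_eq_zero fun k _ => by rw [hall k]; ring
      refine ⟨by rw [hL, hR], ?_⟩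
      constructor
      · intro _ k
        rw [hall k, ← h0]
        simp
      · intro _; rw [hL, hR]
    · -- pmix i > 0
      set c : ℝ := pmix i / Vmix i with hc
      have hcpos : 0 < c := div_pos hpos (hVmixpos i)
      -- pointwise bound
      have hpt : ∀ k,
          lam k * (p i k * Real.log c + (p i k - V i k * c))
            ≤ lam k * (p i k * Real.log (p i k / V i k))
          ∧ (lam k * (p i k * Real.log c + (p i k - V i k * c))
            = lam k * (p i k * Real.log (p i k / V i k))
            ↔ p i k = V i k * c) := by
        intro k
        have hy : 0 < V i k * c := mul_pos (hVpos i k) hcpos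
        obtain ⟨hle, hiff⟩ := klein_aux (hpnn i k) hy
        have hsplit : p i k * Real.log (p i k / (V i k * c))
            = p i k * Real.log (p i k / V i k) - p i k * Real.log c := by
          rcases eq_or_lt_of_le (hpnn i k) with hp0 | hpp
          · rw [← hp0]; ring
          · rw [div_mul_eq_div_div,
              Real.log_div (ne_of_gt (div_pos hpp (hVpos i k))) (ne_of_gt hcpos)]
            ring
        rw [hsplit] at hle hiff
        constructor
        · exact mul_le_mul_of_nonneg_left (by linarith) (hlam k).le
        · constructor
          · intro h
            apply hiff.mp
            have := mul_left_cancel₀ (ne_of_gt (hlam k)) h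
            linarith
          · intro h
            have h2 := hiff.mpr h
            have h3 : p i k * Real.log c + (p i k - V i k * c)
                = p i k * Real.log (p i k / V i k) := by linarith
            rw [h3]
      -- sum of lower bounds equals pmix i * log c
      have hsumg : ∑ k, lam k * (p i k * Real.log c + (p i k - V i k * c))
          = pmix i * Real.log c := by
        have : ∀ k, lam k * (p i k * Real.log c + (p i k - V i k * c))
            = (lam k * p i k) * Real.log c + (lam k * p i k) - (lam k * V i k) * c := by
          intro k; ring
        rw [Finset.sum_congr rfl fun k _ => this k]
        rw [show (∑ k, ((lam k * p i k) * Real.log c + (lam k * p i k)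
              - (lam k * V i k) * c))
            = (∑ k, lam k * p i k) * Real.log c + (∑ k, lam k * p i k)
              - (∑ k, lam k * V i k) * c by
          rw [Finset.sum_sub_distrib, Finset.sum_add_distrib, ← Finset.sum_mul,
            ← Finset.sum_mul]]
        rw [← hpmix, ← hVmix]
        have : Vmix i * c = pmix i := by
          rw [hc, mul_comm, div_mul_eq_mul_div,
            mul_div_assoc, div_self (ne_of_gt (hVmixpos i)), mul_one]
        rw [this]; ring
      constructor
      · calc pmix i * Real.log (pmix i / Vmix i)
            = ∑ k, lam k * (p i k * Real.log c + (p i k - V i k * c)) := by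
              rw [hsumg]
          _ ≤ ∑ k, lam k * (p i k * Real.log (p i k / V i k)) :=
              Finset.sum_le_sum fun k _ => (hpt k).1
      · rw [show pmix i * Real.log (pmix i / Vmix i)
            = ∑ k, lam k * (p i k * Real.log c + (p i k - V i k * c)) from hsumg.symm]
        rw [Finset.sum_eq_sum_iff_of_le fun k _ => (hpt k).1]
        constructor
        · intro h k
          exact ((hpt k).2).mp (h k (Finset.mem_univ k))
        · intro h k _
          exact ((hpt k).2).mpr (h k)
  -- rewrite LHS
  have hLHS : ∑ k, lam k * (-∑ i, p i k * Real.log (p i k / V i k))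
      = -∑ i, ∑ k, lam k * (p i k * Real.log (p i k / V i k)) := by
    have h1 : ∑ k, lam k * (-∑ i, p i k * Real.log (p i k / V i k))
        = ∑ k, ∑ i, -(lam k * (p i k * Real.log (p i k / V i k))) :=
      Finset.sum_congr rfl fun k _ => by
        rw [mul_neg, Finset.mul_sum, ← Finset.sum_neg_distrib]
    rw [h1, Finset.sum_comm]
    simp [Finset.sum_neg_distrib]
  rw [hLHS]
  constructor
  · exact neg_le_neg (Finset.sum_le_sum fun i _ => (key i).1)
  · rw [neg_inj, eq_comm]
    rw [Finset.sum_eq_sum_iff_of_le fun i _ => (key i).1]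
    constructor
    · intro h i k
      exact ((key i).2.mp (h i (Finset.mem_univ i))) k
    · intro h i _
      exact (key i).2.mpr (h i)
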